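/- Let $u$ be a smooth solution of $\partial_t u = \mathcal{L}_\phi u$ on a closed manifold $M$ for $t \in [a,b]$ whose frequency $U(t) = D(t)/I(t)$ is constant equal to $U$. Then $u(x,t) = e^{U(t-a)}\, u(x,a)$ for all $(x,t) \in M \times [a,b]$. -/

import Mathlib

/- STATEMENT 5.  Abstract closed-manifold setting (μ = e^{-φ} dV_g, gradu = ∇u,
Lu = 𝓛_φ u, gradLu = ∇𝓛_φ u).  If the frequency U = D/I is constant equal to U₀ on
[a,b], then u(x,t) = e^{U₀ (t-a)} u(x,a) (for μ-a.e. x, at each time t). -/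
open MeasureTheory
open scoped RealInnerProductSpace Topology

open Filter in
/-- The approximation `⌊s*(n+1)⌋/(n+1)` tends to `s`. -/
lemma approx_tendsto_aux (s : ℝ) :
    Tendsto (fun n : ℕ => ((⌊s * ((n : ℝ) + 1)⌋ : ℝ) / ((n : ℝ) + 1))) atTop (𝓝 s) := by
  have h : ∀ n : ℕ, |(⌊s * ((n : ℝ) + 1)⌋ : ℝ) / ((n : ℝ) + 1) - s| ≤ 1 / ((n : ℝ) + 1) := by
    intro n
    have hn : (0 : ℝ) < (n : ℝ) + 1 := by positivity
    have h1 : (⌊s * ((n : ℝ) + 1)⌋ : ℝ) ≤ s * ((n : ℝ) + 1) := Int.floor_le _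
    have h2 : s * ((n : ℝ) + 1) - 1 < (⌊s * ((n : ℝ) + 1)⌋ : ℝ) := Int.sub_one_lt_floor _
    have hd : (⌊s * ((n : ℝ) + 1)⌋ : ℝ) / ((n : ℝ) + 1) - s
        = ((⌊s * ((n : ℝ) + 1)⌋ : ℝ) - s * ((n : ℝ) + 1)) / ((n : ℝ) + 1) := by
      field_simp
    rw [hd, abs_div, abs_of_pos hn, div_le_div_iff₀ hn hn]
    have habs : |(⌊s * ((n : ℝ) + 1)⌋ : ℝ) - s * ((n : ℝ) + 1)| ≤ 1 :=
      abs_le.mpr ⟨by linarith, by linarith⟩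
    nlinarith [habs]
  have h0 : Tendsto (fun n : ℕ => (⌊s * ((n : ℝ) + 1)⌋ : ℝ) / ((n : ℝ) + 1) - s) atTop (𝓝 0) :=
    squeeze_zero_norm h tendsto_one_div_add_atTop_nhds_zero_nat
  have := h0.add (tendsto_const_nhds (x := s))
  simpa using this

open Filter in
/-- A jointly measurable version of a family which is a.e.-strongly measurable at each time
and continuous in time at each point. -/
lemma jointly_measurable_version {M : Type*} [MeasurableSpace M] (μ : Measure M)
    (w : ℝ → M → ℝ) (hmeas : ∀ t : ℝ, AEStronglyMeasurable (w t) μ)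
    (hcont : ∀ x, Continuous fun s => w s x) :
    ∃ W : ℝ → M → ℝ, Measurable (fun p : ℝ × M => W p.1 p.2) ∧
      ∀ᵐ x ∂μ, ∀ s, W s x = w s x := by
  classical
  obtain ⟨v, hv_meas, hv_eq⟩ : ∃ v : ℤ → ℕ → M → ℝ, (∀ z n, Measurable (v z n)) ∧
      ∀ (z : ℤ) (n : ℕ), (fun x => w ((z : ℝ) / ((n : ℝ) + 1)) x) =ᵐ[μ] v z n :=
    ⟨fun z n => (hmeas ((z : ℝ) / ((n : ℝ) + 1))).mk _,
     fun z n => (hmeas ((z : ℝ) / ((n : ℝ) + 1))).stronglyMeasurable_mk.measurable,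
     fun z n => (hmeas ((z : ℝ) / ((n : ℝ) + 1))).ae_eq_mk⟩
  refine ⟨fun s x => (Filter.liminf
      (fun n : ℕ => ((v ⌊s * ((n : ℝ) + 1)⌋ n x : ℝ) : EReal)) Filter.atTop).toReal, ?_, ?_⟩
  · have h0 : ∀ n : ℕ, Measurable
        (fun p : ℝ × M => ((v ⌊p.1 * ((n : ℝ) + 1)⌋ n p.2 : ℝ) : EReal)) := by
      intro n
      have hF : Measurable (fun q : M × ℤ => v q.2 n q.1) :=
        measurable_from_prod_countable_left (fun z => hv_meas z n)
      have hmap : Measurable (fun p : ℝ × M => ((p.2, ⌊p.1 * ((n : ℝ) + 1)⌋) : M × ℤ)) :=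
        measurable_snd.prodMk (Int.measurable_floor.comp (measurable_fst.mul_const _))
      exact measurable_coe_real_ereal.comp (hF.comp hmap)
    have h1 : Measurable (fun p : ℝ × M => Filter.liminf
        (fun n : ℕ => ((v ⌊p.1 * ((n : ℝ) + 1)⌋ n p.2 : ℝ) : EReal)) Filter.atTop) :=
      Measurable.liminf h0
    exact measurable_ereal_toReal.comp h1
  · have hg : ∀ᵐ x ∂μ, ∀ z : ℤ, ∀ n : ℕ, v z n x = w ((z : ℝ) / ((n : ℝ) + 1)) x := by
      rw [ae_all_iff]
      intro z
      rw [ae_all_iff]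
      intro n
      filter_upwards [hv_eq z n] with x hx using hx.symm
    filter_upwards [hg] with x hx s
    have h1 : Filter.Tendsto (fun n : ℕ => ((v ⌊s * ((n : ℝ) + 1)⌋ n x : ℝ) : EReal))
        Filter.atTop (𝓝 ((w s x : ℝ) : EReal)) := by
      rw [EReal.tendsto_coe]
      simp only [hx]
      exact ((hcont x).tendsto s).comp (approx_tendsto_aux s)
    rw [h1.liminf_eq, EReal.toReal_coe]

open Filter in
/-- A jointly measurable function computing the time derivative of (the function represented
by) a jointly measurable family. -/
lemma measurable_deriv_version {M : Type*} [MeasurableSpace M]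
    (W : ℝ → M → ℝ) (mW : Measurable (fun p : ℝ × M => W p.1 p.2)) :
    ∃ DW : ℝ → M → ℝ, Measurable (fun p : ℝ × M => DW p.1 p.2) ∧
      ∀ (x : M) (g g' : ℝ → ℝ), (∀ s, W s x = g s) → (∀ s, HasDerivAt g (g' s) s) →
        ∀ s, DW s x = g' s := by
  refine ⟨fun s x => (Filter.liminf (fun n : ℕ =>
      ((((n : ℝ) + 1) * (W (s + 1 / ((n : ℝ) + 1)) x - W s x) : ℝ) : EReal))
      Filter.atTop).toReal, ?_, ?_⟩
  · apply measurable_ereal_toReal.comp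
    apply Measurable.liminf
    intro n
    apply measurable_coe_real_ereal.comp
    have h1 : Measurable (fun p : ℝ × M => W (p.1 + 1 / ((n : ℝ) + 1)) p.2) :=
      mW.comp ((measurable_fst.add_const _).prodMk measurable_snd)
    exact measurable_const.mul (h1.sub mW)
  · intro x g g' hWg hg s
    have hpt : Tendsto (fun n : ℕ => s + 1 / ((n : ℝ) + 1)) atTop (𝓝[≠] s) := by
      rw [tendsto_nhdsWithin_iff]
      constructor
      · have := (tendsto_const_nhds (x := s)).add tendsto_one_div_add_atTop_nhds_zero_nat
        simpa using this
      · filter_upwards with n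
        have h1 : (0 : ℝ) < 1 / ((n : ℝ) + 1) := by positivity
        simp only [Set.mem_compl_iff, Set.mem_singleton_iff]
        intro heq
        nlinarith [heq]
    have h2 := (hasDerivAt_iff_tendsto_slope.mp (hg s)).comp hpt
    have heq : (fun n : ℕ => ((n : ℝ) + 1) * (W (s + 1 / ((n : ℝ) + 1)) x - W s x))
        = fun n : ℕ => slope g s (s + 1 / ((n : ℝ) + 1)) := by
      funext n
      have hn : ((n : ℝ) + 1) ≠ 0 := by positivity
      rw [slope_def_field, hWg, hWg, add_sub_cancel_left, div_div_eq_mul_div, div_one]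
      ring
    have h3 : Tendsto (fun n : ℕ =>
        ((((n : ℝ) + 1) * (W (s + 1 / ((n : ℝ) + 1)) x - W s x) : ℝ) : EReal))
        atTop (𝓝 ((g' s : ℝ) : EReal)) := by
      rw [EReal.tendsto_coe, heq]
      exact h2
    show (Filter.liminf (fun n : ℕ =>
        ((((n : ℝ) + 1) * (W (s + 1 / ((n : ℝ) + 1)) x - W s x) : ℝ) : EReal))
        Filter.atTop).toReal = g' s
    rw [h3.liminf_eq, EReal.toReal_coe]

theorem frequency_constant_exponential
    {M : Type*} [MeasurableSpace M] (μ : Measure M) [IsFiniteMeasure μ]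
    {V : Type*} [NormedAddCommGroup V] [InnerProductSpace ℝ V]
    (a b : ℝ) (hab : a ≤ b)
    (u Lu : ℝ → M → ℝ) (gradu gradLu : ℝ → M → V)
    (hu2 : ∀ t, Integrable (fun x => (u t x) ^ 2) μ)
    (hgrad2 : ∀ t, Integrable (fun x => ‖gradu t x‖ ^ 2) μ)
    (hLu2 : ∀ t, Integrable (fun x => (Lu t x) ^ 2) μ)
    (huLu : ∀ t, Integrable (fun x => u t x * Lu t x) μ)
    (hgg : ∀ t, Integrable (fun x => ⟪gradu t x, gradLu t x⟫) μ)
    -- the drift heat equation ∂ₜ u = 𝓛_φ u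
    (hheat : ∀ x t, HasDerivAt (fun s => u s x) (Lu t x) t)
    -- self-adjointness of 𝓛_φ (integration by parts on the closed manifold)
    (hibp : ∀ t, ∫ x, u t x * Lu t x ∂μ = -∫ x, ‖gradu t x‖ ^ 2 ∂μ)
    (hibp2 : ∀ t, ∫ x, ⟪gradu t x, gradLu t x⟫ ∂μ = -∫ x, (Lu t x) ^ 2 ∂μ)
    -- differentiation under the integral sign for I and D
    (hDI : ∀ t ∈ Set.Icc a b,
      HasDerivAt (fun s => ∫ x, (u s x) ^ 2 ∂μ)
        (∫ x, 2 * (u t x * Lu t x) ∂μ) t)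
    (hDD : ∀ t ∈ Set.Icc a b,
      HasDerivAt (fun s => -∫ x, ‖gradu s x‖ ^ 2 ∂μ)
        (-∫ x, 2 * ⟪gradu t x, gradLu t x⟫ ∂μ) t)
    -- positivity of I on [a,b]
    (hIpos : ∀ t ∈ Set.Icc a b, 0 < ∫ x, (u t x) ^ 2 ∂μ)
    -- the frequency U = D/I is constant, equal to U₀, on [a,b]
    (U₀ : ℝ)
    (hU : ∀ t ∈ Set.Icc a b,
      (-∫ x, ‖gradu t x‖ ^ 2 ∂μ) / (∫ x, (u t x) ^ 2 ∂μ) = U₀) :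
    ∀ t ∈ Set.Icc a b, ∀ᵐ x ∂μ, u t x = Real.exp (U₀ * (t - a)) * u a x := by
  classical
  rcases eq_or_lt_of_le hab with rfl | hlt
  · intro t ht
    have ht' : t = a := le_antisymm ht.2 ht.1
    subst ht'
    filter_upwards with x
    simp
  -- ### Part 1: the analytic identity `Lu s =ᵐ U₀ * u s` for each `s ∈ [a,b]`.
  have hIcc : ∀ s ∈ Set.Icc a b,
      -∫ x, ‖gradu s x‖ ^ 2 ∂μ = U₀ * ∫ x, (u s x) ^ 2 ∂μ := by
    intro s hs
    have h := hU s hs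
    rw [div_eq_iff (hIpos s hs).ne'] at h
    linarith [h]
  have hderiv_eq : ∀ s ∈ Set.Icc a b,
      -∫ x, 2 * ⟪gradu s x, gradLu s x⟫ ∂μ = U₀ * ∫ x, 2 * (u s x * Lu s x) ∂μ := by
    intro s hs
    have hud := uniqueDiffOn_Icc hlt s hs
    have h1 := (hDD s hs).hasDerivWithinAt (s := Set.Icc a b)
    have h2 := (HasDerivAt.const_mul U₀ (hDI s hs)).hasDerivWithinAt (s := Set.Icc a b)
    have h2' : HasDerivWithinAt (fun r => -∫ x, ‖gradu r x‖ ^ 2 ∂μ)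
        (U₀ * ∫ x, 2 * (u s x * Lu s x) ∂μ) (Set.Icc a b) s :=
      h2.congr (fun r hr => hIcc r hr) (hIcc s hs)
    have e1 := h1.derivWithin hud
    have e2 := h2'.derivWithin hud
    rw [← e1, ← e2]
  have hKs : ∀ s ∈ Set.Icc a b,
      ∫ x, u s x * Lu s x ∂μ = U₀ * ∫ x, (u s x) ^ 2 ∂μ := fun s hs =>
    (hibp s).trans (hIcc s hs)
  have hL2s : ∀ s ∈ Set.Icc a b,
      ∫ x, (Lu s x) ^ 2 ∂μ = U₀ ^ 2 * ∫ x, (u s x) ^ 2 ∂μ := by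
    intro s hs
    have h := hderiv_eq s hs
    rw [integral_const_mul, integral_const_mul, hibp2 s, hKs s hs] at h
    linear_combination h / 2
  have hint2 : ∀ s : ℝ, Integrable (fun x => (Lu s x - U₀ * u s x) ^ 2) μ := by
    intro s
    have hiB : Integrable (fun x => (2 * U₀) * (u s x * Lu s x)) μ := (huLu s).const_mul _
    have hiC : Integrable (fun x => U₀ ^ 2 * (u s x) ^ 2) μ := (hu2 s).const_mul _
    have hiA : Integrable (fun x => (Lu s x) ^ 2 - (2 * U₀) * (u s x * Lu s x)) μ :=
      (hLu2 s).sub hiB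
    have hiD : Integrable
        (fun x => ((Lu s x) ^ 2 - (2 * U₀) * (u s x * Lu s x)) + U₀ ^ 2 * (u s x) ^ 2) μ :=
      hiA.add hiC
    have hfun : (fun x => (Lu s x - U₀ * u s x) ^ 2)
        = fun x => ((Lu s x) ^ 2 - (2 * U₀) * (u s x * Lu s x)) + U₀ ^ 2 * (u s x) ^ 2 := by
      funext x; ring
    rw [hfun]
    exact hiD
  have hzero : ∀ s ∈ Set.Icc a b, ∫ x, (Lu s x - U₀ * u s x) ^ 2 ∂μ = 0 := by
    intro s hs
    have hiB : Integrable (fun x => (2 * U₀) * (u s x * Lu s x)) μ := (huLu s).const_mul _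
    have hiC : Integrable (fun x => U₀ ^ 2 * (u s x) ^ 2) μ := (hu2 s).const_mul _
    have hiA : Integrable (fun x => (Lu s x) ^ 2 - (2 * U₀) * (u s x * Lu s x)) μ :=
      (hLu2 s).sub hiB
    have hfun : (fun x => (Lu s x - U₀ * u s x) ^ 2)
        = fun x => ((Lu s x) ^ 2 - (2 * U₀) * (u s x * Lu s x)) + U₀ ^ 2 * (u s x) ^ 2 := by
      funext x; ring
    rw [hfun, integral_add hiA hiC, integral_sub (hLu2 s) hiB, integral_const_mul,
      integral_const_mul, hL2s s hs, hKs s hs]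
    ring
  have key : ∀ s ∈ Set.Icc a b, ∀ᵐ x ∂μ, u s x * Lu s x = U₀ * (u s x) ^ 2 := by
    intro s hs
    have hnn : 0 ≤ fun x => (Lu s x - U₀ * u s x) ^ 2 := fun x => sq_nonneg _
    have h := (integral_eq_zero_iff_of_nonneg hnn (hint2 s)).mp (hzero s hs)
    filter_upwards [h] with x hx
    have h0 : Lu s x - U₀ * u s x = 0 := sq_eq_zero_iff.mp hx
    have hLux : Lu s x = U₀ * u s x := by linarith
    rw [hLux]; ring
  -- ### Part 2: jointly measurable versions
  have hcont : ∀ x : M, Continuous fun s => u s x := fun x =>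
    continuous_iff_continuousAt.mpr fun s => (hheat x s).continuousAt
  obtain ⟨W, mW, hWae⟩ := jointly_measurable_version μ (fun s x => (u s x) ^ 2)
    (fun t => (hu2 t).aestronglyMeasurable) (fun x => (hcont x).pow 2)
  obtain ⟨DW, mDW, hDWspec⟩ := measurable_deriv_version W mW
  have hw' : ∀ x s, HasDerivAt (fun r => (u r x) ^ 2) (2 * u s x * Lu s x) s := by
    intro x s
    have := (hheat x s).pow 2
    norm_num at this
    exact this
  have hDWx : ∀ x : M, (∀ s, W s x = (u s x) ^ 2) → ∀ s, DW s x = 2 * u s x * Lu s x :=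
    fun x hx => hDWspec x (fun s => (u s x) ^ 2) (fun s => 2 * u s x * Lu s x) hx (hw' x)
  -- ### Part 3: Fubini
  set ν : Measure ℝ := (volume : Measure ℝ).restrict (Set.Icc a b) with hν_def
  have hmeasP : MeasurableSet {z : M × ℝ | DW z.2 z.1 = 2 * U₀ * W z.2 z.1} := by
    have h1 : Measurable fun z : M × ℝ => DW z.2 z.1 := mDW.comp measurable_swap
    have h2 : Measurable fun z : M × ℝ => 2 * U₀ * W z.2 z.1 :=
      measurable_const.mul (mW.comp measurable_swap)
    exact measurableSet_eq_fun h1 h2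
  have hswap : ∀ᵐ x ∂μ, ∀ᵐ s ∂ν, DW s x = 2 * U₀ * W s x := by
    rw [Measure.ae_ae_comm hmeasP]
    filter_upwards [ae_restrict_mem measurableSet_Icc] with s hs
    filter_upwards [hWae, key s hs] with x hg hk
    rw [hDWx x hg s, hg s]
    linarith [hk]
  -- ### Part 4: conclusion
  intro t ht
  filter_upwards [hswap, hWae] with x hsx hg
  have hae_s : ∀ᵐ s ∂ν, 2 * u s x * Lu s x - 2 * U₀ * (u s x) ^ 2 = 0 := by
    filter_upwards [hsx] with s h
    rw [hDWx x hg s, hg s] at h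
    linarith [h]
  -- FTC: for every r ∈ [a,b], (u r x)^2 = exp(2U₀(r-a)) (u a x)^2
  have hsq : ∀ r, a ≤ r → r ≤ b → (u r x) ^ 2 = Real.exp (2 * U₀ * (r - a)) * (u a x) ^ 2 := by
    intro r har hrb
    set E : ℝ → ℝ := fun s => Real.exp (-(2 * U₀) * (s - a)) with hE_def
    have hE : ∀ s, HasDerivAt E (-(2 * U₀) * E s) s := by
      intro s
      have h1 : HasDerivAt (fun r : ℝ => -(2 * U₀) * (r - a)) (-(2 * U₀)) s := by
        simpa using ((hasDerivAt_id s).sub_const a).const_mul (-(2 * U₀))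
      have := h1.exp
      simpa [hE_def, mul_comm] using this
    set H : ℝ → ℝ := fun s => E s * (2 * u s x * Lu s x - 2 * U₀ * (u s x) ^ 2) with hH_def
    have hder : ∀ s, HasDerivAt (fun r => E r * (u r x) ^ 2) (H s) s := by
      intro s
      have := (hE s).mul (hw' x s)
      exact this.congr_deriv (by simp only [hH_def]; ring)
    have hsub : Set.Ioc a r ⊆ Set.Icc a b :=
      Set.Ioc_subset_Icc_self.trans (Set.Icc_subset_Icc le_rfl hrb)
    have hH0 : ∀ᵐ s ∂(volume.restrict (Set.Ioc a r)), H s = 0 := by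
      apply ae_restrict_of_ae_restrict_of_subset hsub
      filter_upwards [hae_s] with s h
      rw [hH_def]
      simp only
      rw [h, mul_zero]
    have hint : IntervalIntegrable H volume a r := by
      rw [intervalIntegrable_iff, Set.uIoc_of_le har]
      exact (integrable_zero _ _ _).congr (hH0.mono fun s h => h.symm)
    have hFTC := intervalIntegral.integral_eq_sub_of_hasDerivAt (fun s _ => hder s) hint
    have hzero2 : ∫ s in a..r, H s = 0 := by
      rw [intervalIntegral.integral_of_le har]
      exact integral_eq_zero_of_ae hH0
    have h1 : E r * (u r x) ^ 2 = E a * (u a x) ^ 2 := by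
      rw [hzero2] at hFTC
      linarith [hFTC]
    have hEa : E a = 1 := by simp [hE_def]
    have hEr : Real.exp (2 * U₀ * (r - a)) * E r = 1 := by
      rw [hE_def]
      simp only
      rw [← Real.exp_add]
      norm_num
    calc (u r x) ^ 2 = Real.exp (2 * U₀ * (r - a)) * E r * (u r x) ^ 2 := by
          rw [hEr]; ring
      _ = Real.exp (2 * U₀ * (r - a)) * (E a * (u a x) ^ 2) := by
          rw [mul_assoc, h1]
      _ = Real.exp (2 * U₀ * (r - a)) * (u a x) ^ 2 := by rw [hEa]; ring
  -- the squared identity at time t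
  set c : ℝ := Real.exp (U₀ * (t - a)) with hc_def
  have hcpos : 0 < c := Real.exp_pos _
  have hc2 : c ^ 2 = Real.exp (2 * U₀ * (t - a)) := by
    rw [hc_def, sq, ← Real.exp_add]
    ring_nf
  have hsq_t : (u t x) ^ 2 = (c * u a x) ^ 2 := by
    rw [hsq t ht.1 ht.2, mul_pow, hc2]
  -- sign analysis
  have hfact : (u t x - c * u a x) * (u t x + c * u a x) = 0 := by
    nlinarith [hsq_t]
  rcases mul_eq_zero.mp hfact with h | h
  · linarith [h]
  -- bad case: u t x = -(c * u a x)
  by_cases hua : u a x = 0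
  · rw [hua] at h ⊢
    have : u t x = 0 := by linarith [h]
    rw [this]; ring
  · exfalso
    have hne : ∀ r ∈ Set.Icc a t, u r x ≠ 0 := by
      intro r hr h0
      have hr2 := hsq r hr.1 (le_trans hr.2 ht.2)
      rw [h0] at hr2
      have hpos : 0 < Real.exp (2 * U₀ * (r - a)) * (u a x) ^ 2 := by
        have h2 : (0:ℝ) < (u a x) ^ 2 := by positivity
        positivity
      simp only [ne_eq, OfNat.ofNat_ne_zero, not_false_eq_true, zero_pow] at hr2
      nlinarith [hr2, hpos]
    have hfc : ContinuousOn (fun r => u r x * u a x) (Set.Icc a t) :=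
      ((hcont x).mul continuous_const).continuousOn
    have hfa : 0 < u a x * u a x := by
      rcases lt_or_gt_of_ne hua with h' | h' <;> nlinarith
    have hft : u t x * u a x < 0 := by
      have hut : u t x = -(c * u a x) := by linarith [h]
      rw [hut]
      nlinarith [hcpos, hfa]
    have hmem : (0 : ℝ) ∈ Set.Icc ((fun r => u r x * u a x) t) ((fun r => u r x * u a x) a) :=
      ⟨le_of_lt hft, le_of_lt hfa⟩
    obtain ⟨r, hr, hfr⟩ := intermediate_value_Icc' ht.1 hfc hmem
    have : u r x = 0 := by
      rcases mul_eq_zero.mp hfr with h' | h'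
      · exact h'
      · exact absurd h' hua
    exact hne r hr this
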